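/- Suppose the cocycle (ψ,ϑ) is σ-periodic and (H1), (H2) with j = 1 and (H3) hold. Let γ(t) = (ϑ^t(q), u(t)), t ≥ 0, be a semi-trajectory of the skew-product semiflow with precompact image. Then every point (q', v) of the ω-limit set ω(γ₀) lies on a σ-periodic trajectory of the cocycle at q', and each fibre ω_{q'}(γ₀) is homeomorphic to a closed segment of ℝ (i.e., it is a nonempty compact connected subset of a line after projection by Π). -/

import Mathlib

open MeasureTheory Set Bornology Filter Topology RealInnerProductSpace

noncomputable section

variable {Q H : Type*}

section Defs
variable [MetricSpace Q] [NormedAddCommGroup H] [InnerProductSpace ℝ H] [CompleteSpace H]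

def IsFlow (ϑ : ℝ → Q → Q) : Prop :=
  (∀ q, ϑ 0 q = q) ∧ (∀ t s q, ϑ (t + s) q = ϑ t (ϑ s q)) ∧
    Continuous fun p : ℝ × Q => ϑ p.1 p.2

def IsCocycle (ϑ : ℝ → Q → Q) (ψ : ℝ → Q → H → H) : Prop :=
  (∀ q u, ψ 0 q u = u) ∧
  (∀ t s : ℝ, 0 ≤ t → 0 ≤ s → ∀ q u, ψ (t + s) q u = ψ t (ϑ s q) (ψ s q u)) ∧
  ContinuousOn (fun p : ℝ × Q × H => ψ p.1 p.2.1 p.2.2) {p : ℝ × Q × H | 0 ≤ p.1}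

def IsCompleteTraj (ϑ : ℝ → Q → Q) (ψ : ℝ → Q → H → H) (q : Q) (u : ℝ → H) : Prop :=
  Continuous u ∧ ∀ t s : ℝ, 0 ≤ t → u (t + s) = ψ t (ϑ s q) (u s)

def IsAmenable (ν : ℝ) (u : ℝ → H) : Prop :=
  IntegrableOn (fun s : ℝ => Real.exp (2 * ν * s) * ‖u s‖ ^ 2) (Set.Iic (0:ℝ))

def amenSet (ϑ : ℝ → Q → Q) (ψ : ℝ → Q → H → H) (ν : ℝ) (q : Q) : Set H :=
  {u₀ | ∃ u : ℝ → H, IsCompleteTraj ϑ ψ q u ∧ IsAmenable ν u ∧ u 0 = u₀}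

structure HypH1 (P : H →L[ℝ] H) (Hplus Hminus : Submodule ℝ H) : Prop where
  selfAdj : IsSelfAdjoint P
  closed_plus : IsClosed (Hplus : Set H)
  orth : Hminus = Hplusᗮ
  inv_plus : ∀ u ∈ Hplus, P u ∈ Hplus
  inv_minus : ∀ u ∈ Hminus, P u ∈ Hminus
  pos : ∀ u ∈ Hplus, u ≠ 0 → (0:ℝ) < ⟪P u, u⟫
  neg : ∀ u ∈ Hminus, u ≠ 0 → ⟪P u, u⟫ < 0

def HypH2 (Hminus : Submodule ℝ H) (j : ℕ) : Prop :=
  FiniteDimensional ℝ Hminus ∧ Module.finrank ℝ Hminus = j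

def HypH3 (ψ : ℝ → Q → H → H) (P : H →L[ℝ] H) (δ ν : ℝ) : Prop :=
  0 < δ ∧ 0 < ν ∧ ∀ (q : Q) (u v : H) (l r : ℝ), 0 ≤ l → l ≤ r →
    Real.exp (2 * ν * r) * ⟪P (ψ r q u - ψ r q v), ψ r q u - ψ r q v⟫ -
      Real.exp (2 * ν * l) * ⟪P (ψ l q u - ψ l q v), ψ l q u - ψ l q v⟫ ≤
      -δ * ∫ s in l..r, Real.exp (2 * ν * s) * ‖ψ s q u - ψ s q v‖ ^ 2

def IsOrthProjOnto (Hminus : Submodule ℝ H) (Pi : H →L[ℝ] H) : Prop :=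
  (∀ u, Pi u ∈ Hminus) ∧ ∀ u, u - Pi u ∈ Hminusᗮ

def HypCOM2 (ψ : ℝ → Q → H → H) : Prop :=
  ∃ tc : ℝ, 0 < tc ∧ ∀ (q : Q) (s : Set H), IsBounded s → IsCompact (closure (ψ tc q '' s))

def HypCOM3 (ψ : ℝ → Q → H → H) : Prop :=
  ∀ (q : Q) (u₀ : H), IsBounded ((fun t => ψ t q u₀) '' Set.Ici (0:ℝ)) →
    IsCompact (closure ((fun t => ψ t q u₀) '' Set.Ici (0:ℝ)))

def LyapunovStable (ψ : ℝ → Q → H → H) (q : Q) (v : ℝ → H) : Prop :=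
  ∀ ε > 0, ∃ η > 0, ∀ u₀ : H, ‖u₀ - v 0‖ < η → ∀ t ≥ 0, ‖ψ t q u₀ - v t‖ < ε

end Defs

def circleFlow (σ : ℝ) : ℝ → AddCircle σ → AddCircle σ := fun t θ => θ + (t : AddCircle σ)

/-- The ω-limit set in `Q × H` of the skew-product semi-trajectory starting at `(q, u₀)`:
limits of sequences `π^{t_k}(q, u₀) = (ϑ^{t_k}(q), ψ^{t_k}(q, u₀))` with `t_k → +∞`. -/
def omegaLimitSet {Q H : Type*} [MetricSpace Q] [NormedAddCommGroup H]
    [InnerProductSpace ℝ H] (ϑ : ℝ → Q → Q) (ψ : ℝ → Q → H → H) (q : Q) (u₀ : H) :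
    Set (Q × H) :=
  {p | ∃ tk : ℕ → ℝ, (∀ n, 0 ≤ tk n) ∧ Tendsto tk atTop atTop ∧
    Tendsto (fun n => (ϑ (tk n) q, ψ (tk n) q u₀)) atTop (𝓝 p)}

set_option linter.unusedSectionVars false
namespace OmegaAux

variable {H : Type*} [NormedAddCommGroup H] [InnerProductSpace ℝ H] [CompleteSpace H]
variable {σ : ℝ} {ψ : ℝ → AddCircle σ → H → H} {q : AddCircle σ} {u₀ : H}

def traj (ψ : ℝ → AddCircle σ → H → H) (q : AddCircle σ) (u₀ : H) : Set (AddCircle σ × H) :=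
  closure ((fun t => (circleFlow σ t q, ψ t q u₀)) '' Set.Ici (0:ℝ))

def fib (ψ : ℝ → AddCircle σ → H → H) (q : AddCircle σ) (u₀ : H) (θ : AddCircle σ) : Set H :=
  {v : H | (θ, v) ∈ omegaLimitSet (circleFlow σ) ψ q u₀}

lemma coe_nat_mul_period (σ : ℝ) (n : ℕ) : (((n : ℝ) * σ : ℝ) : AddCircle σ) = 0 := by
  have : ((n : ℝ) * σ) = (n : ℤ) • σ := by rw [zsmul_eq_mul]; push_cast; ring
  rw [this, AddCircle.coe_zsmul, AddCircle.coe_period, smul_zero]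

lemma coe_int_mul_period (σ : ℝ) (k : ℤ) : ((σ * (k : ℝ) : ℝ) : AddCircle σ) = 0 := by
  have : (σ * (k : ℝ)) = k • σ := by rw [zsmul_eq_mul]; ring
  rw [this, AddCircle.coe_zsmul, AddCircle.coe_period, smul_zero]

lemma tendsto_psi (hcoc : IsCocycle (circleFlow σ) ψ) {t : ℝ} (ht : 0 ≤ t)
    {θ : AddCircle σ} {v : H} {ts : ℕ → ℝ} {θs : ℕ → AddCircle σ} {vs : ℕ → H}
    (hts : ∀ n, 0 ≤ ts n) (h₁ : Tendsto ts atTop (𝓝 t)) (h₂ : Tendsto θs atTop (𝓝 θ))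
    (h₃ : Tendsto vs atTop (𝓝 v)) :
    Tendsto (fun n => ψ (ts n) (θs n) (vs n)) atTop (𝓝 (ψ t θ v)) := by
  have hc := hcoc.2.2 (t, θ, v) (by exact ht)
  have hseq : Tendsto (fun n => ((ts n, θs n, vs n) : ℝ × AddCircle σ × H)) atTop
      (𝓝[{p : ℝ × AddCircle σ × H | 0 ≤ p.1}] (t, θ, v)) :=
    tendsto_nhdsWithin_iff.mpr ⟨h₁.prodMk_nhds (h₂.prodMk_nhds h₃),
      Filter.Eventually.of_forall hts⟩
  exact hc.tendsto.comp hseq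

lemma tendsto_psi_const (hcoc : IsCocycle (circleFlow σ) ψ) {t : ℝ} (ht : 0 ≤ t)
    {θ : AddCircle σ} {v : H} {θs : ℕ → AddCircle σ} {vs : ℕ → H}
    (h₂ : Tendsto θs atTop (𝓝 θ)) (h₃ : Tendsto vs atTop (𝓝 v)) :
    Tendsto (fun n => ψ t (θs n) (vs n)) atTop (𝓝 (ψ t θ v)) :=
  tendsto_psi hcoc ht (fun _ => ht) tendsto_const_nhds h₂ h₃

lemma mem_traj {t : ℝ} (ht : 0 ≤ t) : (circleFlow σ t q, ψ t q u₀) ∈ traj ψ q u₀ :=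
  subset_closure ⟨t, ht, rfl⟩

lemma omega_subset_traj : omegaLimitSet (circleFlow σ) ψ q u₀ ⊆ traj ψ q u₀ := by
  rintro p ⟨tk, hnn, -, hlim⟩
  exact isClosed_closure.mem_of_tendsto hlim
    (Filter.Eventually.of_forall fun n => mem_traj (hnn n))

lemma isClosed_omega : IsClosed (omegaLimitSet (circleFlow σ) ψ q u₀) := by
  apply IsSeqClosed.isClosed
  intro x p hx hp
  have key : ∀ j : ℕ, ∃ s : ℝ, (j : ℝ) ≤ s ∧
      dist ((circleFlow σ s q, ψ s q u₀) : AddCircle σ × H) (x j) < 1 / ((j : ℝ) + 1) := by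
    intro j
    obtain ⟨tk, hnn, htop, hlim⟩ := hx j
    have h1 : ∀ᶠ k in atTop, (j:ℝ) ≤ tk k := htop.eventually_ge_atTop _
    have h2 : ∀ᶠ k in atTop,
        dist ((circleFlow σ (tk k) q, ψ (tk k) q u₀) : AddCircle σ × H) (x j)
          < 1/((j:ℝ)+1) := by
      obtain ⟨N, hN⟩ := Metric.tendsto_atTop.mp hlim (1/((j:ℝ)+1)) (by positivity)
      exact eventually_atTop.mpr ⟨N, hN⟩
    obtain ⟨k, hk1, hk2⟩ := (h1.and h2).exists
    exact ⟨tk k, hk1, hk2⟩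
  choose s hs1 hs2 using key
  refine ⟨s, fun j => le_trans (Nat.cast_nonneg j) (hs1 j),
    tendsto_atTop_mono hs1 tendsto_natCast_atTop_atTop, ?_⟩
  rw [tendsto_iff_dist_tendsto_zero]
  have hg : Tendsto (fun j : ℕ => 1/((j:ℝ)+1) + dist (x j) p) atTop (𝓝 (0 + 0)) :=
    (tendsto_one_div_add_atTop_nhds_zero_nat).add (tendsto_iff_dist_tendsto_zero.mp hp)
  rw [add_zero] at hg
  apply squeeze_zero (fun j => dist_nonneg) (fun j => ?_) hg
  calc dist ((circleFlow σ (s j) q, ψ (s j) q u₀) : AddCircle σ × H) p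
      ≤ dist ((circleFlow σ (s j) q, ψ (s j) q u₀) : AddCircle σ × H) (x j) + dist (x j) p :=
        dist_triangle _ _ _
    _ ≤ 1/((j:ℝ)+1) + dist (x j) p := add_le_add (hs2 j).le le_rfl

lemma isCompact_omega (hpre : IsCompact (traj ψ q u₀)) :
    IsCompact (omegaLimitSet (circleFlow σ) ψ q u₀) :=
  hpre.of_isClosed_subset isClosed_omega omega_subset_traj

lemma isClosed_fib (θ : AddCircle σ) : IsClosed (fib ψ q u₀ θ) :=
  isClosed_omega.preimage (Continuous.prodMk_right θ)

lemma fib_subset (θ : AddCircle σ) : fib ψ q u₀ θ ⊆ Prod.snd '' traj ψ q u₀ :=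
  fun v hv => ⟨(θ, v), omega_subset_traj hv, rfl⟩

lemma isCompact_fib (hpre : IsCompact (traj ψ q u₀)) (θ : AddCircle σ) :
    IsCompact (fib ψ q u₀ θ) :=
  (hpre.image continuous_snd).of_isClosed_subset (isClosed_fib θ) (fib_subset θ)

lemma forward_inv (hcoc : IsCocycle (circleFlow σ) ψ) {θ : AddCircle σ} {v : H} {t : ℝ}
    (ht : 0 ≤ t) (hv : v ∈ fib ψ q u₀ θ) :
    ψ t θ v ∈ fib ψ q u₀ (θ + (t : AddCircle σ)) := by
  obtain ⟨tk, hnn, htop, hlim⟩ := hv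
  have hfst : Tendsto (fun n => circleFlow σ (tk n) q) atTop (𝓝 θ) :=
    (continuous_fst.tendsto _).comp hlim
  have hsnd : Tendsto (fun n => ψ (tk n) q u₀) atTop (𝓝 v) :=
    (continuous_snd.tendsto _).comp hlim
  refine ⟨fun n => t + tk n, fun n => add_nonneg ht (hnn n),
    tendsto_atTop_add_const_left _ t htop, ?_⟩
  have heq : ∀ n, (circleFlow σ (t + tk n) q, ψ (t + tk n) q u₀)
      = (circleFlow σ (tk n) q + (t : AddCircle σ),
         ψ t (circleFlow σ (tk n) q) (ψ (tk n) q u₀)) := by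
    intro n
    refine Prod.ext ?_ ?_
    · show q + ((t + tk n : ℝ) : AddCircle σ) = (q + ((tk n : ℝ) : AddCircle σ)) + _
      rw [AddCircle.coe_add]
      abel
    · exact hcoc.2.1 t (tk n) ht (hnn n) q u₀
  simp only [heq]
  exact Tendsto.prodMk_nhds
    (((continuous_add_right ((t:ℝ) : AddCircle σ)).tendsto θ).comp hfst)
    (tendsto_psi_const hcoc ht hfst hsnd)

lemma backward_exists (hcoc : IsCocycle (circleFlow σ) ψ) (hpre : IsCompact (traj ψ q u₀))
    {θ : AddCircle σ} {v : H} (hv : v ∈ fib ψ q u₀ θ) {t : ℝ} (ht : 0 ≤ t) :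
    ∃ z, z ∈ fib ψ q u₀ (θ - (t : AddCircle σ)) ∧ ψ t (θ - (t : AddCircle σ)) z = v := by
  obtain ⟨tk, hnn, htop, hlim⟩ := hv
  obtain ⟨K, hK⟩ := eventually_atTop.mp (htop.eventually_ge_atTop t)
  set sk : ℕ → ℝ := fun k => tk (k + K) - t with hsk
  have hsknn : ∀ k, 0 ≤ sk k := fun k => sub_nonneg.mpr (hK _ (Nat.le_add_left K k))
  have hsktop : Tendsto sk atTop atTop := by
    have h1 : Tendsto (fun k => tk (k + K)) atTop atTop :=
      htop.comp (tendsto_add_atTop_nat K)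
    simpa [hsk, sub_eq_add_neg] using tendsto_atTop_add_const_right atTop (-t) h1
  have hpk : ∀ k, (circleFlow σ (sk k) q, ψ (sk k) q u₀) ∈ traj ψ q u₀ :=
    fun k => mem_traj (hsknn k)
  obtain ⟨z', hz'mem, ρ, hρ, hconv⟩ := hpre.tendsto_subseq hpk
  obtain ⟨θ', z⟩ := z'
  have hρtop : Tendsto (fun j => ρ j + K) atTop atTop :=
    (tendsto_add_atTop_nat K).comp hρ.tendsto_atTop
  have hfst : Tendsto (fun j => circleFlow σ (sk (ρ j)) q) atTop (𝓝 θ') :=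
    (continuous_fst.tendsto _).comp hconv
  have hsnd : Tendsto (fun j => ψ (sk (ρ j)) q u₀) atTop (𝓝 z) :=
    (continuous_snd.tendsto _).comp hconv
  have hbase : ∀ k, circleFlow σ (sk k) q
      = circleFlow σ (tk (k + K)) q - ((t:ℝ) : AddCircle σ) := by
    intro k
    show q + ((tk (k+K) - t : ℝ) : AddCircle σ) = (q + ((tk (k+K) : ℝ) : AddCircle σ)) - _
    rw [QuotientAddGroup.mk_sub]
    abel
  have hθ' : θ' = θ - ((t:ℝ) : AddCircle σ) := by
    have h2 : Tendsto (fun j => circleFlow σ (sk (ρ j)) q) atTop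
        (𝓝 (θ - ((t:ℝ) : AddCircle σ))) := by
      have h3 : Tendsto (fun j => circleFlow σ (tk (ρ j + K)) q) atTop (𝓝 θ) :=
        ((continuous_fst.tendsto _).comp hlim).comp hρtop
      have := ((continuous_sub_right ((t:ℝ) : AddCircle σ)).tendsto θ).comp h3
      simpa [hbase, Function.comp_def] using this
    exact tendsto_nhds_unique hfst h2
  subst hθ'
  refine ⟨z, ⟨fun j => sk (ρ j), fun j => hsknn _, hsktop.comp hρ.tendsto_atTop, ?_⟩, ?_⟩
  · exact hconv
  · have hseq : ∀ j, ψ (tk (ρ j + K)) q u₀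
        = ψ t (circleFlow σ (sk (ρ j)) q) (ψ (sk (ρ j)) q u₀) := by
      intro j
      have h4 := hcoc.2.1 t (sk (ρ j)) ht (hsknn _) q u₀
      rw [← h4]
      congr 1
      simp [hsk]
    have h5 : Tendsto (fun j => ψ (tk (ρ j + K)) q u₀) atTop (𝓝 v) :=
      ((continuous_snd.tendsto _).comp hlim).comp hρtop
    have h6 : Tendsto (fun j => ψ (tk (ρ j + K)) q u₀) atTop
        (𝓝 (ψ t (θ - ((t:ℝ) : AddCircle σ)) z)) := by
      simp only [hseq]
      exact tendsto_psi_const hcoc ht hfst hsnd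
    exact (tendsto_nhds_unique h6 h5)

lemma exists_tau (hσ : 0 < σ) (q θ : AddCircle σ) :
    ∃ τ : ℝ, 0 ≤ τ ∧ circleFlow σ τ q = θ := by
  obtain ⟨r, hr⟩ := QuotientAddGroup.mk_surjective (θ - q)
  refine ⟨r + (⌈-r/σ⌉₊ : ℝ) * σ, ?_, ?_⟩
  · have h1 := Nat.le_ceil (-r/σ)
    have h2 : -r / σ * σ ≤ (⌈-r/σ⌉₊ : ℝ) * σ := mul_le_mul_of_nonneg_right h1 hσ.le
    rw [div_mul_cancel₀ _ hσ.ne'] at h2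
    linarith
  · show q + _ = θ
    rw [AddCircle.coe_add, coe_nat_mul_period, add_zero]
    have : ((r : ℝ) : AddCircle σ) = θ - q := hr
    rw [this]
    abel

lemma exists_traj (hcoc : IsCocycle (circleFlow σ) ψ) (hpre : IsCompact (traj ψ q u₀))
    {θ : AddCircle σ} {v : H} (hv : v ∈ fib ψ q u₀ θ) :
    ∃ w : ℝ → H, IsCompleteTraj (circleFlow σ) ψ θ w ∧ w 0 = v ∧
      ∀ s : ℝ, w s ∈ fib ψ q u₀ (θ + (s : AddCircle σ)) := by
  classical
  set B : ℕ → AddCircle σ := fun n => θ - (((n:ℕ) : ℝ) : AddCircle σ) with hB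
  have hB0 : B 0 = θ := by simp [hB]
  have hBsucc : ∀ n : ℕ, B (n+1) + ((1:ℝ) : AddCircle σ) = B n := by
    intro n
    simp only [hB]
    have : (((n+1:ℕ) : ℝ) : AddCircle σ)
        = (((n:ℕ) : ℝ) : AddCircle σ) + ((1:ℝ) : AddCircle σ) := by
      push_cast
      rw [AddCircle.coe_add]
    rw [this]
    abel
  have step : ∀ (n : ℕ) (u : H), u ∈ fib ψ q u₀ (B n) →
      ∃ z : H, z ∈ fib ψ q u₀ (B (n+1)) ∧ ψ 1 (B (n+1)) z = u := by
    intro n u hu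
    have hEq : B n - ((1:ℝ) : AddCircle σ) = B (n+1) := by
      rw [← hBsucc n]; abel
    obtain ⟨z, hz1, hz2⟩ := backward_exists hcoc hpre hu (t := 1) zero_le_one
    rw [hEq] at hz1 hz2
    exact ⟨z, hz1, hz2⟩
  choose Z hZmem hZeq using step
  let F : ∀ n : ℕ, {u : H // u ∈ fib ψ q u₀ (B n)} :=
    fun n => Nat.rec (motive := fun n => {u : H // u ∈ fib ψ q u₀ (B n)})
      ⟨v, by rw [hB0]; exact hv⟩
      (fun n p => ⟨Z n p.1 p.2, hZmem n p.1 p.2⟩) n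
  have hF0 : (F 0).1 = v := rfl
  have hFsucc : ∀ n, ψ 1 (B (n+1)) (F (n+1)).1 = (F n).1 := fun n => hZeq n (F n).1 (F n).2
  have hstep : ∀ (n : ℕ) (s : ℝ), 0 ≤ s + (n:ℝ) →
      ψ (s + ((n:ℝ)+1)) (B (n+1)) (F (n+1)).1 = ψ (s + (n:ℝ)) (B n) (F n).1 := by
    intro n s h0
    have h1 := hcoc.2.1 (s + (n:ℝ)) 1 h0 zero_le_one (B (n+1)) (F (n+1)).1
    have hflow : circleFlow σ 1 (B (n+1)) = B n := hBsucc n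
    rw [hflow, hFsucc n] at h1
    calc ψ (s + ((n:ℝ)+1)) (B (n+1)) (F (n+1)).1
        = ψ ((s + (n:ℝ)) + 1) (B (n+1)) (F (n+1)).1 := by ring_nf
      _ = ψ (s + (n:ℝ)) (B n) (F n).1 := h1
  have hindep : ∀ (n m : ℕ), n ≤ m → ∀ s : ℝ, 0 ≤ s + (n:ℝ) →
      ψ (s + (n:ℝ)) (B n) (F n).1 = ψ (s + (m:ℝ)) (B m) (F m).1 := by
    intro n m hnm
    induction m, hnm using Nat.le_induction with
    | base => intro s _; rfl
    | succ m hm ih =>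
      intro s hs
      have hs' : 0 ≤ s + (m:ℝ) := by
        have : (n:ℝ) ≤ (m:ℝ) := Nat.cast_le.mpr hm
        linarith
      rw [ih s hs]
      have := (hstep m s hs').symm
      rw [this]
      norm_num
  set wfun : ℝ → H := fun s => ψ (s + ((⌈-s⌉₊ : ℕ) : ℝ)) (B ⌈-s⌉₊) (F ⌈-s⌉₊).1 with hwfun
  have hceil : ∀ s : ℝ, 0 ≤ s + ((⌈-s⌉₊ : ℕ) : ℝ) := by
    intro s
    have := Nat.le_ceil (-s)
    linarith
  have hw_eq : ∀ (s : ℝ) (n : ℕ), 0 ≤ s + (n:ℝ) →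
      wfun s = ψ (s + (n:ℝ)) (B n) (F n).1 := by
    intro s n hn
    rcases le_total (⌈-s⌉₊ : ℕ) n with h | h
    · exact hindep _ _ h s (hceil s)
    · exact (hindep _ _ h s hn).symm
  have htraj : ∀ t s : ℝ, 0 ≤ t → wfun (t + s) = ψ t (circleFlow σ s θ) (wfun s) := by
    intro t s ht
    set n : ℕ := ⌈-s⌉₊ with hn
    have h₀ : (0:ℝ) ≤ s + (n:ℝ) := hceil s
    have h₁ : (0:ℝ) ≤ (t + s) + (n:ℝ) := by linarith
    rw [hw_eq (t+s) n h₁, hw_eq s n h₀]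
    have h2 := hcoc.2.1 t (s + (n:ℝ)) ht h₀ (B n) (F n).1
    have hflow : circleFlow σ (s + (n:ℝ)) (B n) = circleFlow σ s θ := by
      show B n + ((s + (n:ℝ) : ℝ) : AddCircle σ) = θ + ((s:ℝ) : AddCircle σ)
      rw [AddCircle.coe_add]
      simp only [hB]
      abel
    rw [hflow] at h2
    calc ψ (t + s + (n:ℝ)) (B n) (F n).1
        = ψ (t + (s + (n:ℝ))) (B n) (F n).1 := by ring_nf
      _ = ψ t (circleFlow σ s θ) (ψ (s + (n:ℝ)) (B n) (F n).1) := h2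
  have hmem : ∀ s : ℝ, wfun s ∈ fib ψ q u₀ (θ + ((s:ℝ) : AddCircle σ)) := by
    intro s
    set n : ℕ := ⌈-s⌉₊ with hn
    have h₀ : (0:ℝ) ≤ s + (n:ℝ) := hceil s
    rw [hw_eq s n h₀]
    have h1 := forward_inv hcoc h₀ (F n).2
    have h2 : B n + ((s + (n:ℝ) : ℝ) : AddCircle σ) = θ + ((s:ℝ) : AddCircle σ) := by
      rw [AddCircle.coe_add]
      simp only [hB]
      abel
    rwa [h2] at h1
  have hcont : Continuous wfun := by
    rw [continuous_iff_continuousAt]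
    intro s₀
    set n : ℕ := ⌈-s₀⌉₊ + 2 with hn
    have hpos : (2:ℝ) ≤ s₀ + (n:ℝ) := by
      have := Nat.le_ceil (-s₀)
      have h2 : ((⌈-s₀⌉₊ : ℕ) : ℝ) = (n:ℝ) - 2 := by
        rw [hn]; push_cast; ring
      linarith
    have hball : ∀ s ∈ Metric.ball s₀ 1, wfun s = ψ (s + (n:ℝ)) (B n) (F n).1 := by
      intro s hs
      apply hw_eq
      have habs : |s - s₀| < 1 := by
        rw [Metric.mem_ball, Real.dist_eq] at hs
        exact hs
      have h3 := abs_lt.mp habs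
      linarith [hpos, h3.1]
    have hCA : ContinuousAt (fun s : ℝ => ψ (s + (n:ℝ)) (B n) (F n).1) s₀ := by
      have hmain : ContinuousAt (fun p : ℝ × AddCircle σ × H => ψ p.1 p.2.1 p.2.2)
          ((s₀ + (n:ℝ), B n, (F n).1)) := by
        apply hcoc.2.2.continuousAt
        have hopen : IsOpen {p : ℝ × AddCircle σ × H | 0 < p.1} :=
          isOpen_lt continuous_const continuous_fst
        exact Filter.mem_of_superset (hopen.mem_nhds (by linarith : (0:ℝ) < s₀ + (n:ℝ)))
          (fun p (hp : 0 < p.1) => le_of_lt hp)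
      have hg : ContinuousAt (fun s : ℝ => ((s + (n:ℝ), B n, (F n).1) : ℝ × AddCircle σ × H)) s₀ :=
        Continuous.continuousAt (by fun_prop)
      have hco : ContinuousAt ((fun p : ℝ × AddCircle σ × H => ψ p.1 p.2.1 p.2.2) ∘
          (fun s : ℝ => ((s + (n:ℝ), B n, (F n).1) : ℝ × AddCircle σ × H))) s₀ :=
        ContinuousAt.comp hmain hg
      exact hco
    apply hCA.congr
    filter_upwards [Metric.ball_mem_nhds s₀ one_pos] with s hs
    exact (hball s hs).symm
  refine ⟨wfun, ⟨hcont, htraj⟩, ?_, hmem⟩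
  have h0 : wfun 0 = ψ ((0:ℝ) + ((0:ℕ):ℝ)) (B 0) (F 0).1 := hw_eq 0 0 (by norm_num)
  rw [h0, hF0, hB0]
  norm_num
  exact hcoc.1 θ v

variable {P : H →L[ℝ] H} {Hplus Hminus : Submodule ℝ H} {δ ν : ℝ} {Pii : H →L[ℝ] H}

lemma pair_g_mono (hcoc : IsCocycle (circleFlow σ) ψ) (h3 : HypH3 ψ P δ ν)
    {θ : AddCircle σ} {w₁ w₂ : ℝ → H}
    (hw₁ : IsCompleteTraj (circleFlow σ) ψ θ w₁) (hw₂ : IsCompleteTraj (circleFlow σ) ψ θ w₂)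
    {x y : ℝ} (hxy : x ≤ y) :
    Real.exp (2*ν*y) * ⟪P (w₁ y - w₂ y), w₁ y - w₂ y⟫
      ≤ Real.exp (2*ν*x) * ⟪P (w₁ x - w₂ x), w₁ x - w₂ x⟫
        - δ * ∫ s in x..y, Real.exp (2*ν*s) * ‖w₁ s - w₂ s‖^2 := by
  set Vy : ℝ := ⟪P (w₁ y - w₂ y), w₁ y - w₂ y⟫ with hVy
  set Vx : ℝ := ⟪P (w₁ x - w₂ x), w₁ x - w₂ x⟫ with hVx
  have h := h3.2.2 (circleFlow σ x θ) (w₁ x) (w₂ x) 0 (y - x) le_rfl (by linarith)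
  have e₁ : ψ (y - x) (circleFlow σ x θ) (w₁ x) = w₁ y := by
    rw [← hw₁.2 (y - x) x (by linarith)]
    congr 1
    ring
  have e₂ : ψ (y - x) (circleFlow σ x θ) (w₂ x) = w₂ y := by
    rw [← hw₂.2 (y - x) x (by linarith)]
    congr 1
    ring
  have e₃ : ψ 0 (circleFlow σ x θ) (w₁ x) = w₁ x := hcoc.1 _ _
  have e₄ : ψ 0 (circleFlow σ x θ) (w₂ x) = w₂ x := hcoc.1 _ _
  rw [e₁, e₂, e₃, e₄] at h
  have hint : (∫ s in (0:ℝ)..(y-x),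
      Real.exp (2*ν*s) * ‖ψ s (circleFlow σ x θ) (w₁ x) - ψ s (circleFlow σ x θ) (w₂ x)‖^2)
      = ∫ s in (0:ℝ)..(y-x), Real.exp (2*ν*s) * ‖w₁ (s + x) - w₂ (s + x)‖^2 := by
    apply intervalIntegral.integral_congr
    intro s hs
    rw [Set.uIcc_of_le (by linarith : (0:ℝ) ≤ y - x)] at hs
    dsimp only
    rw [hw₁.2 s x hs.1, hw₂.2 s x hs.1]
  rw [hint] at h
  have hI : (∫ s in x..y, Real.exp (2*ν*s) * ‖w₁ s - w₂ s‖^2)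
      = Real.exp (2*ν*x) * ∫ s in (0:ℝ)..(y-x), Real.exp (2*ν*s) * ‖w₁ (s+x) - w₂ (s+x)‖^2 := by
    rw [← intervalIntegral.integral_const_mul]
    have h7 : (∫ s in x..y, Real.exp (2*ν*s) * ‖w₁ s - w₂ s‖^2)
        = ∫ s in (0:ℝ)..(y-x), Real.exp (2*ν*(s+x)) * ‖w₁ (s+x) - w₂ (s+x)‖^2 := by
      rw [intervalIntegral.integral_comp_add_right
        (fun s => Real.exp (2*ν*s) * ‖w₁ s - w₂ s‖^2) x]
      norm_num
    rw [h7]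
    apply intervalIntegral.integral_congr
    intro s _
    dsimp only
    rw [show (2*ν*(s+x)) = 2*ν*x + 2*ν*s by ring, Real.exp_add, mul_assoc]
  have h6 := mul_le_mul_of_nonneg_left h (Real.exp_nonneg (2*ν*x))
  have hE : Real.exp (2*ν*x) * Real.exp (2*ν*(y-x)) = Real.exp (2*ν*y) := by
    rw [← Real.exp_add]
    congr 1
    ring
  have hE0 : Real.exp (2*ν*(0:ℝ)) = 1 := by
    norm_num
  rw [hE0] at h6
  rw [hI]
  set J : ℝ := ∫ s in (0:ℝ)..(y-x), Real.exp (2*ν*s) * ‖w₁ (s+x) - w₂ (s+x)‖^2 with hJ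
  have h8 : Real.exp (2*ν*x) * (Real.exp (2*ν*(y-x)) * Vy - 1 * Vx)
      = Real.exp (2*ν*y)*Vy - Real.exp (2*ν*x)*Vx := by
    rw [← hE]; ring
  have h9 : Real.exp (2*ν*x) * (-δ*J) = -δ*(Real.exp (2*ν*x)*J) := by ring
  rw [h8, h9] at h6
  linarith

lemma g_tendsto_atBot (hν : 0 < ν) {d : ℝ → H} {M : ℝ} (hM : ∀ t, ‖d t‖ ≤ M) :
    Tendsto (fun t => Real.exp (2*ν*t) * ⟪P (d t), d t⟫) atBot (𝓝 0) := by
  set K := ‖P‖ * M * M with hK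
  have hexp : Tendsto (fun t : ℝ => Real.exp (2*ν*t)) atBot (𝓝 0) := by
    apply Real.tendsto_exp_atBot.comp
    exact (tendsto_const_mul_atBot_of_pos (by linarith : (0:ℝ) < 2*ν)).mpr tendsto_id
  have habs : ∀ t, |Real.exp (2*ν*t) * ⟪P (d t), d t⟫| ≤ Real.exp (2*ν*t) * K := by
    intro t
    rw [abs_mul, abs_of_pos (Real.exp_pos _)]
    apply mul_le_mul_of_nonneg_left _ (Real.exp_pos _).le
    calc |⟪P (d t), d t⟫| ≤ ‖P (d t)‖ * ‖d t‖ := abs_real_inner_le_norm _ _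
      _ ≤ (‖P‖ * ‖d t‖) * ‖d t‖ := by
          apply mul_le_mul_of_nonneg_right (P.le_opNorm _) (norm_nonneg _)
      _ ≤ K := by
          rw [hK]
          have h0 : (0:ℝ) ≤ ‖d t‖ := norm_nonneg _
          have h1 : ‖d t‖ ≤ M := hM t
          have hM0 : (0:ℝ) ≤ M := le_trans h0 h1
          exact mul_le_mul (mul_le_mul_of_nonneg_left h1 (norm_nonneg _)) h1 h0
            (mul_nonneg (norm_nonneg _) hM0)
  have hup : Tendsto (fun t : ℝ => Real.exp (2*ν*t) * K) atBot (𝓝 0) := by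
    have := hexp.mul_const K
    simpa using this
  have hlo : Tendsto (fun t : ℝ => -(Real.exp (2*ν*t) * K)) atBot (𝓝 0) := by
    have := hup.neg
    simpa using this
  apply tendsto_of_tendsto_of_tendsto_of_le_of_le hlo hup
  · intro t
    dsimp only
    have := (abs_le.mp (habs t)).1
    linarith
  · intro t
    dsimp only
    exact (abs_le.mp (habs t)).2

lemma pair_V_nonpos (hcoc : IsCocycle (circleFlow σ) ψ) (h3 : HypH3 ψ P δ ν)
    {θ : AddCircle σ} {w₁ w₂ : ℝ → H}
    (hw₁ : IsCompleteTraj (circleFlow σ) ψ θ w₁) (hw₂ : IsCompleteTraj (circleFlow σ) ψ θ w₂)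
    {M : ℝ} (hM : ∀ t : ℝ, ‖w₁ t - w₂ t‖ ≤ M) :
    ⟪P (w₁ 0 - w₂ 0), w₁ 0 - w₂ 0⟫ ≤ 0 := by
  have hgt := g_tendsto_atBot (P := P) h3.2.1 (d := fun t => w₁ t - w₂ t) hM
  have hmono : ∀ a : ℝ, a ≤ 0 →
      Real.exp (2*ν*(0:ℝ)) * ⟪P (w₁ 0 - w₂ 0), w₁ 0 - w₂ 0⟫
        ≤ Real.exp (2*ν*a) * ⟪P (w₁ a - w₂ a), w₁ a - w₂ a⟫ := by
    intro a ha
    have h1 := pair_g_mono hcoc h3 hw₁ hw₂ ha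
    have h2 : (0:ℝ) ≤ ∫ s in a..(0:ℝ), Real.exp (2*ν*s) * ‖w₁ s - w₂ s‖^2 :=
      intervalIntegral.integral_nonneg ha (fun u _ => by positivity)
    nlinarith [h3.1]
  have h4 : Real.exp (2*ν*(0:ℝ)) * ⟪P (w₁ 0 - w₂ 0), w₁ 0 - w₂ 0⟫ ≤ 0 := by
    apply ge_of_tendsto hgt
    filter_upwards [eventually_le_atBot (0:ℝ)] with a ha
    exact hmono a ha
  have hE0 : Real.exp (2*ν*(0:ℝ)) = 1 := by norm_num
  rw [hE0, one_mul] at h4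
  exact h4

lemma pair_V_neg (hcoc : IsCocycle (circleFlow σ) ψ) (h3 : HypH3 ψ P δ ν)
    {θ : AddCircle σ} {w₁ w₂ : ℝ → H}
    (hw₁ : IsCompleteTraj (circleFlow σ) ψ θ w₁) (hw₂ : IsCompleteTraj (circleFlow σ) ψ θ w₂)
    {M : ℝ} (hM : ∀ t : ℝ, ‖w₁ t - w₂ t‖ ≤ M) (hne : w₁ 0 ≠ w₂ 0) :
    ⟪P (w₁ 0 - w₂ 0), w₁ 0 - w₂ 0⟫ < 0 := by
  rcases lt_or_eq_of_le (pair_V_nonpos hcoc h3 hw₁ hw₂ hM) with h | h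
  · exact h
  exfalso
  set d : ℝ → H := fun t => w₁ t - w₂ t with hd
  have hcont_d : Continuous d := hw₁.1.sub hw₂.1
  have hdne : d 0 ≠ 0 := sub_ne_zero_of_ne hne
  have hev : ∀ᶠ s in 𝓝 (0:ℝ), d s ≠ 0 := hcont_d.continuousAt.eventually_ne hdne
  obtain ⟨η, hη, hball⟩ := Metric.eventually_nhds_iff.mp hev
  set a : ℝ := -(η/2) with ha
  have hintg : Continuous (fun s => Real.exp (2*ν*s) * ‖d s‖^2) := by
    apply Continuous.mul
    · exact Real.continuous_exp.comp (by continuity)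
    · exact (hcont_d.norm).pow 2
  have hIpos : (0:ℝ) < ∫ s in a..(0:ℝ), Real.exp (2*ν*s) * ‖d s‖^2 := by
    apply intervalIntegral.intervalIntegral_pos_of_pos_on
      (hintg.intervalIntegrable a 0)
    · intro s hs
      have hsne : d s ≠ 0 := by
        apply hball
        rw [Real.dist_eq]
        rw [ha] at hs
        cases hs with
        | intro h1 h2 =>
          rw [abs_sub_comm, abs_of_nonneg (by linarith : (0:ℝ) ≤ 0 - s)]
          linarith
      have := norm_pos_iff.mpr hsne
      positivity
    · rw [ha]; linarith
  set I := ∫ s in a..(0:ℝ), Real.exp (2*ν*s) * ‖d s‖^2 with hI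
  have hgt := g_tendsto_atBot (P := P) h3.2.1 (d := d) hM
  have hkey : ∀ b : ℝ, b ≤ a →
      δ * I ≤ Real.exp (2*ν*b) * ⟪P (d b), d b⟫ := by
    intro b hb
    have h1 := pair_g_mono hcoc h3 hw₁ hw₂ (le_trans hb (by rw [ha]; linarith) : b ≤ (0:ℝ))
    have hsplit : (∫ s in b..a, Real.exp (2*ν*s) * ‖d s‖^2) + I
        = ∫ s in b..(0:ℝ), Real.exp (2*ν*s) * ‖d s‖^2 :=
      intervalIntegral.integral_add_adjacent_intervals
        (hintg.intervalIntegrable b a) (hintg.intervalIntegrable a 0)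
    have h2 : (0:ℝ) ≤ ∫ s in b..a, Real.exp (2*ν*s) * ‖d s‖^2 :=
      intervalIntegral.integral_nonneg hb (fun u _ => by positivity)
    have hV0 : Real.exp (2*ν*(0:ℝ)) * ⟪P (d 0), d 0⟫ = 0 := by
      have hE0 : Real.exp (2*ν*(0:ℝ)) = 1 := by norm_num
      rw [hE0, one_mul]
      exact h
    rw [← hsplit] at h1
    rw [hV0] at h1
    nlinarith [h3.1]
  have h5 : δ * I ≤ 0 := by
    apply ge_of_tendsto hgt
    filter_upwards [eventually_le_atBot a] with b hb
    exact hkey b hb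
  nlinarith [h3.1, hIpos]

lemma exists_unit (h2 : HypH2 Hminus 1) (hPi : IsOrthProjOnto Hminus Pii) :
    ∃ e : H, e ∈ Hminus ∧ ‖e‖ = 1 ∧ (∀ x : H, Pii x = ⟪e, x⟫ • e) := by
  haveI : FiniteDimensional ℝ Hminus := h2.1
  have hnt : Nontrivial Hminus := by
    apply Module.nontrivial_of_finrank_pos (R := ℝ)
    rw [h2.2]
    norm_num
  obtain ⟨x, hx⟩ := exists_ne (0 : Hminus)
  set e : H := ‖(x:H)‖⁻¹ • (x : H) with he
  have hxne : (x : H) ≠ 0 := fun hc => hx (Subtype.ext hc)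
  have hnorm : ‖e‖ = 1 := norm_smul_inv_norm hxne
  have hmem : e ∈ Hminus := Hminus.smul_mem _ x.2
  have hene : e ≠ 0 := by
    intro hc
    rw [hc, norm_zero] at hnorm
    norm_num at hnorm
  have hspan : Submodule.span ℝ {(⟨e, hmem⟩ : Hminus)} = ⊤ := by
    rw [← finrank_eq_one_iff_of_nonzero (⟨e, hmem⟩ : Hminus)
      (fun hc => hene (congrArg Subtype.val hc))]
    exact h2.2
  have hrep : ∀ y : H, y ∈ Hminus → ∃ c : ℝ, y = c • e := by
    intro y hy
    have : (⟨y, hy⟩ : Hminus) ∈ Submodule.span ℝ {(⟨e, hmem⟩ : Hminus)} := by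
      rw [hspan]; trivial
    obtain ⟨c, hc⟩ := Submodule.mem_span_singleton.mp this
    refine ⟨c, ?_⟩
    have := congrArg Subtype.val hc
    simpa using this.symm
  refine ⟨e, hmem, hnorm, fun x => ?_⟩
  obtain ⟨c, hc⟩ := hrep (Pii x) (hPi.1 x)
  have horth := hPi.2 x
  have h0 : ⟪e, x - Pii x⟫ = 0 := by
    exact (Submodule.mem_orthogonal Hminus _).mp horth e hmem
  have h1 : ⟪e, x⟫ = ⟪e, Pii x⟫ := by
    have := inner_sub_right (𝕜 := ℝ) e x (Pii x)
    rw [h0] at this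
    linarith
  have h2' : ⟪e, Pii x⟫ = c := by
    rw [hc, real_inner_smul_right, real_inner_self_eq_norm_sq, hnorm]
    norm_num
  rw [hc, h1, h2']

lemma phi_zero_V_nonneg (h1 : HypH1 P Hplus Hminus) (hPi : IsOrthProjOnto Hminus Pii)
    {e : H} (hef : ∀ x : H, Pii x = ⟪e, x⟫ • e) {x : H} (hx : ⟪e, x⟫ = 0) :
    (0:ℝ) ≤ ⟪P x, x⟫ := by
  haveI : CompleteSpace Hplus := h1.closed_plus.completeSpace_coe
  have hmo : Hminusᗮ = Hplus := by
    rw [h1.orth, Submodule.orthogonal_orthogonal]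
  have hPix : Pii x = 0 := by rw [hef x, hx, zero_smul]
  have hxm : x ∈ Hplus := by
    rw [← hmo]
    have := hPi.2 x
    rwa [hPix, sub_zero] at this
  rcases eq_or_ne x 0 with rfl | hne
  · simp
  · exact (h1.pos x hxm hne).le

lemma traj_bound (hpre : IsCompact (traj ψ q u₀)) :
    ∃ M : ℝ, ∀ θ : AddCircle σ, ∀ v ∈ fib ψ q u₀ θ, ‖v‖ ≤ M := by
  obtain ⟨M, hM⟩ := isBounded_iff_forall_norm_le.mp (hpre.image continuous_snd).isBounded
  exact ⟨M, fun θ v hv => hM v (fib_subset θ hv)⟩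

lemma fib_V_neg (hcoc : IsCocycle (circleFlow σ) ψ) (hpre : IsCompact (traj ψ q u₀))
    (h3 : HypH3 ψ P δ ν) {θ : AddCircle σ} {v₁ v₂ : H}
    (hv₁ : v₁ ∈ fib ψ q u₀ θ) (hv₂ : v₂ ∈ fib ψ q u₀ θ) (hne : v₁ ≠ v₂) :
    ⟪P (v₁ - v₂), v₁ - v₂⟫ < 0 := by
  obtain ⟨w₁, hw₁, hw₁0, hw₁mem⟩ := exists_traj hcoc hpre hv₁
  obtain ⟨w₂, hw₂, hw₂0, hw₂mem⟩ := exists_traj hcoc hpre hv₂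
  obtain ⟨M, hM⟩ := traj_bound hpre
  have hMd : ∀ t : ℝ, ‖w₁ t - w₂ t‖ ≤ M + M := by
    intro t
    calc ‖w₁ t - w₂ t‖ ≤ ‖w₁ t‖ + ‖w₂ t‖ := norm_sub_le _ _
      _ ≤ M + M := add_le_add (hM _ _ (hw₁mem t)) (hM _ _ (hw₂mem t))
  have := pair_V_neg hcoc h3 hw₁ hw₂ hMd (by rw [hw₁0, hw₂0]; exact hne)
  rwa [hw₁0, hw₂0] at this

lemma fib_phi_inj (hcoc : IsCocycle (circleFlow σ) ψ) (hpre : IsCompact (traj ψ q u₀))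
    (h1 : HypH1 P Hplus Hminus) (h3 : HypH3 ψ P δ ν) (hPi : IsOrthProjOnto Hminus Pii)
    {e : H} (hef : ∀ x : H, Pii x = ⟪e, x⟫ • e) {θ : AddCircle σ} {v₁ v₂ : H}
    (hv₁ : v₁ ∈ fib ψ q u₀ θ) (hv₂ : v₂ ∈ fib ψ q u₀ θ) (heq : ⟪e, v₁⟫ = ⟪e, v₂⟫) :
    v₁ = v₂ := by
  by_contra hne
  have hVneg := fib_V_neg hcoc hpre h3 hv₁ hv₂ hne
  have hz : ⟪e, v₁ - v₂⟫ = 0 := by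
    rw [inner_sub_right]
    rw [heq]
    ring
  have := phi_zero_V_nonneg h1 hPi hef hz
  linarith

lemma order_pres (hσ : 0 < σ) (hcoc : IsCocycle (circleFlow σ) ψ)
    (hpre : IsCompact (traj ψ q u₀))
    (h1 : HypH1 P Hplus Hminus) (h3 : HypH3 ψ P δ ν) (hPi : IsOrthProjOnto Hminus Pii)
    {e : H} (hef : ∀ x : H, Pii x = ⟪e, x⟫ • e) {θ : AddCircle σ} {v₁ v₂ : H}
    (hv₁ : v₁ ∈ fib ψ q u₀ θ) (hv₂ : v₂ ∈ fib ψ q u₀ θ) (hlt : ⟪e, v₁⟫ < ⟪e, v₂⟫) :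
    ⟪e, ψ σ θ v₁⟫ < ⟪e, ψ σ θ v₂⟫ := by
  obtain ⟨w₁, hw₁, hw₁0, hw₁mem⟩ := exists_traj hcoc hpre hv₁
  obtain ⟨w₂, hw₂, hw₂0, hw₂mem⟩ := exists_traj hcoc hpre hv₂
  have hne : v₁ ≠ v₂ := fun hc => absurd (by rw [hc]) (ne_of_lt hlt)
  -- w₁ t ≠ w₂ t for all t
  have hVd0 : ⟪P (w₁ 0 - w₂ 0), w₁ 0 - w₂ 0⟫ < 0 := by
    rw [hw₁0, hw₂0]
    exact fib_V_neg hcoc hpre h3 hv₁ hv₂ hne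
  have hdne : ∀ t : ℝ, w₁ t ≠ w₂ t := by
    intro t hceq
    rcases le_or_gt 0 t with ht | ht
    · have hmono := pair_g_mono hcoc h3 hw₁ hw₂ ht
      have hzero : ⟪P (w₁ t - w₂ t), w₁ t - w₂ t⟫ = 0 := by
        rw [hceq, sub_self]
        simp
      rw [hzero, mul_zero] at hmono
      have hInn : (0:ℝ) ≤ ∫ s in (0:ℝ)..t, Real.exp (2*ν*s) * ‖w₁ s - w₂ s‖^2 :=
        intervalIntegral.integral_nonneg ht (fun u _ => by positivity)
      have hE0pos : (0:ℝ) < Real.exp (2*ν*(0:ℝ)) := Real.exp_pos _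
      nlinarith [h3.1]
    · have h5 := hw₁.2 (-t) t (by linarith)
      have h6 := hw₂.2 (-t) t (by linarith)
      rw [hceq] at h5
      have : w₁ (-t + t) = w₂ (-t + t) := by rw [h5, h6]
      rw [neg_add_cancel] at this
      rw [hw₁0, hw₂0] at this
      exact hne this
  have hVd : ∀ t : ℝ, ⟪P (w₁ t - w₂ t), w₁ t - w₂ t⟫ < 0 := by
    intro t
    exact fib_V_neg hcoc hpre h3 (hw₁mem t) (hw₂mem t) (hdne t)
  have hphine : ∀ t : ℝ, ⟪e, w₂ t⟫ - ⟪e, w₁ t⟫ ≠ 0 := by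
    intro t hc
    have hz : ⟪e, w₁ t - w₂ t⟫ = 0 := by
      rw [inner_sub_right]
      linarith
    have := phi_zero_V_nonneg h1 hPi hef hz
    linarith [hVd t]
  set f : ℝ → ℝ := fun t => ⟪e, w₂ t⟫ - ⟪e, w₁ t⟫ with hf
  have hfc : Continuous f := by
    apply Continuous.sub
    · exact (continuous_const.inner hw₂.1)
    · exact (continuous_const.inner hw₁.1)
  have hf0 : 0 < f 0 := by
    rw [hf]
    dsimp only
    rw [hw₁0, hw₂0]
    linarith
  have hfσ : 0 < f σ := by
    by_contra hcon
    push_neg at hcon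
    have hflt : f σ < 0 := lt_of_le_of_ne hcon (hphine σ)
    have : (0:ℝ) ∈ Set.Icc (f σ) (f 0) := ⟨hflt.le, hf0.le⟩
    have hIVT := intermediate_value_Icc' hσ.le hfc.continuousOn this
    obtain ⟨c, _, hc2⟩ := hIVT
    exact hphine c hc2
  have hw₁σ : w₁ σ = ψ σ θ v₁ := by
    have := hw₁.2 σ 0 hσ.le
    rw [add_zero] at this
    rw [this, hw₁0]
    congr 1
    show θ + ((0:ℝ) : AddCircle σ) = θ
    norm_num
  have hw₂σ : w₂ σ = ψ σ θ v₂ := by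
    have := hw₂.2 σ 0 hσ.le
    rw [add_zero] at this
    rw [this, hw₂0]
    congr 1
    show θ + ((0:ℝ) : AddCircle σ) = θ
    norm_num
  have : 0 < ⟪e, w₂ σ⟫ - ⟪e, w₁ σ⟫ := hfσ
  rw [hw₁σ, hw₂σ] at this
  linarith

def orb (ψ : ℝ → AddCircle σ → H → H) (q : AddCircle σ) (u₀ : H) (τ : ℝ) : ℕ → H :=
  fun m => ψ ((m:ℝ)*σ + τ) q u₀

variable {θ : AddCircle σ} {τ : ℝ}

lemma orb_time_nonneg (hσ : 0 < σ) (hτ : 0 ≤ τ) (m : ℕ) : 0 ≤ (m:ℝ)*σ + τ := by positivity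

lemma orb_base (hbase : circleFlow σ τ q = θ) (m : ℕ) :
    circleFlow σ ((m:ℝ)*σ + τ) q = θ := by
  show q + (((m:ℝ)*σ + τ : ℝ) : AddCircle σ) = θ
  rw [AddCircle.coe_add, coe_nat_mul_period, zero_add]
  exact hbase

lemma orb_succ (hσ : 0 < σ) (hcoc : IsCocycle (circleFlow σ) ψ) (hτ : 0 ≤ τ)
    (hbase : circleFlow σ τ q = θ) (m : ℕ) :
    orb ψ q u₀ τ (m+1) = ψ σ θ (orb ψ q u₀ τ m) := by
  show ψ (((m+1:ℕ):ℝ)*σ + τ) q u₀ = ψ σ θ (ψ ((m:ℝ)*σ + τ) q u₀)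
  have ht : (((m+1:ℕ):ℝ)*σ + τ) = σ + ((m:ℝ)*σ + τ) := by push_cast; ring
  rw [ht, hcoc.2.1 σ ((m:ℝ)*σ + τ) hσ.le (orb_time_nonneg hσ hτ m) q u₀, orb_base hbase]

lemma orb_mem_snd (hσ : 0 < σ) (hτ : 0 ≤ τ) (m : ℕ) :
    orb ψ q u₀ τ m ∈ Prod.snd '' traj ψ q u₀ :=
  ⟨_, mem_traj (orb_time_nonneg hσ hτ m), rfl⟩

lemma orb_limit_mem_fib (hσ : 0 < σ) (hτ : 0 ≤ τ) (hbase : circleFlow σ τ q = θ)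
    {m : ℕ → ℕ} (hm : Tendsto m atTop atTop) {y : H}
    (hy : Tendsto (fun j => orb ψ q u₀ τ (m j)) atTop (𝓝 y)) :
    y ∈ fib ψ q u₀ θ := by
  refine ⟨fun j => (m j : ℝ)*σ + τ, fun j => orb_time_nonneg hσ hτ _, ?_, ?_⟩
  · exact tendsto_atTop_add_const_right _ τ
      ((tendsto_natCast_atTop_atTop.comp hm).atTop_mul_const hσ)
  · have heq : (fun j => (circleFlow σ ((m j : ℝ)*σ + τ) q, ψ ((m j : ℝ)*σ + τ) q u₀))
        = fun j => ((θ, orb ψ q u₀ τ (m j)) : AddCircle σ × H) := by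
      funext j
      rw [orb_base hbase]
      rfl
    rw [heq]
    exact Tendsto.prodMk_nhds tendsto_const_nhds hy

lemma nat_tendsto_of_cast {n : ℕ → ℕ} {g : ℕ → ℝ} (hg : Tendsto g atTop atTop)
    (hb : ∀ k, g k ≤ (n k : ℝ)) : Tendsto n atTop atTop := by
  rw [tendsto_atTop_atTop]
  intro b
  obtain ⟨K, hK⟩ := eventually_atTop.mp (hg.eventually_ge_atTop (b:ℝ))
  exact ⟨K, fun k hk => Nat.cast_le.mp (le_trans (hK k hk) (hb k))⟩

lemma claimA (hσ : 0 < σ) (hcoc : IsCocycle (circleFlow σ) ψ)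
    (hpre : IsCompact (traj ψ q u₀)) (hτ : 0 ≤ τ) (hbase : circleFlow σ τ q = θ)
    {v : H} (hv : v ∈ fib ψ q u₀ θ) :
    ∃ m : ℕ → ℕ, Tendsto m atTop atTop ∧
      Tendsto (fun j => orb ψ q u₀ τ (m j)) atTop (𝓝 v) := by
  obtain ⟨tk, hnn, htop, hpair⟩ := hv
  obtain ⟨K, hK⟩ := eventually_atTop.mp (htop.eventually_ge_atTop τ)
  set sk : ℕ → ℝ := fun k => tk (k + K) with hsk
  have hsτ : ∀ k, τ ≤ sk k := fun k => hK _ (Nat.le_add_left K k)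
  have hstop : Tendsto sk atTop atTop := htop.comp (tendsto_add_atTop_nat K)
  have hspair : Tendsto (fun k => (circleFlow σ (sk k) q, ψ (sk k) q u₀)) atTop
      (𝓝 (θ, v)) := hpair.comp (tendsto_add_atTop_nat K)
  set n : ℕ → ℕ := fun k => ⌊(sk k - τ)/σ⌋₊ with hn
  set ε : ℕ → ℝ := fun k => sk k - τ - (n k : ℝ)*σ with hε
  have hdivnn : ∀ k, 0 ≤ (sk k - τ)/σ := fun k => div_nonneg (by linarith [hsτ k]) hσ.le
  have hε0 : ∀ k, 0 ≤ ε k := by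
    intro k
    have hfl : ((n k : ℕ) : ℝ) ≤ (sk k - τ)/σ := Nat.floor_le (hdivnn k)
    have := mul_le_mul_of_nonneg_right hfl hσ.le
    rw [div_mul_cancel₀ _ hσ.ne'] at this
    simp only [hε]
    linarith
  have hεσ : ∀ k, ε k ≤ σ := by
    intro k
    have hfl : (sk k - τ)/σ < (n k : ℝ) + 1 := Nat.lt_floor_add_one _
    have := mul_lt_mul_of_pos_right hfl hσ
    rw [div_mul_cancel₀ _ hσ.ne'] at this
    simp only [hε]
    nlinarith
  have hdecomp : ∀ k, ψ (sk k) q u₀ = ψ (ε k) θ (orb ψ q u₀ τ (n k)) := by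
    intro k
    have ht : sk k = ε k + ((n k : ℝ)*σ + τ) := by simp only [hε]; ring
    rw [ht, hcoc.2.1 (ε k) ((n k : ℝ)*σ + τ) (hε0 k) (orb_time_nonneg hσ hτ _) q u₀,
      orb_base hbase]
    rfl
  have hbase2 : ∀ k, circleFlow σ (sk k) q = θ + ((ε k : ℝ) : AddCircle σ) := by
    intro k
    have ht : sk k = ((n k : ℝ)*σ + τ) + ε k := by simp only [hε]; ring
    show q + ((sk k : ℝ) : AddCircle σ) = _
    rw [ht, AddCircle.coe_add]
    rw [← add_assoc]
    congr 1
    exact orb_base hbase (n k)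
  have hcompact : IsCompact ((Set.Icc (0:ℝ) σ) ×ˢ (Prod.snd '' traj ψ q u₀)) :=
    isCompact_Icc.prod (hpre.image continuous_snd)
  have hmem : ∀ k, ((ε k, orb ψ q u₀ τ (n k)) : ℝ × H)
      ∈ (Set.Icc (0:ℝ) σ) ×ˢ (Prod.snd '' traj ψ q u₀) :=
    fun k => ⟨⟨hε0 k, hεσ k⟩, orb_mem_snd hσ hτ _⟩
  obtain ⟨pl, hpl, ρ, hρ, hconv⟩ := hcompact.tendsto_subseq hmem
  obtain ⟨εs, z⟩ := pl
  have hεlim : Tendsto (fun j => ε (ρ j)) atTop (𝓝 εs) :=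
    (continuous_fst.tendsto _).comp hconv
  have hXlim : Tendsto (fun j => orb ψ q u₀ τ (n (ρ j))) atTop (𝓝 z) :=
    (continuous_snd.tendsto _).comp hconv
  have hεs0 : 0 ≤ εs := hpl.1.1
  have hval : v = ψ εs θ z := by
    have h5 : Tendsto (fun j => ψ (sk (ρ j)) q u₀) atTop (𝓝 v) :=
      ((continuous_snd.tendsto _).comp hspair).comp hρ.tendsto_atTop
    have h6 : Tendsto (fun j => ψ (sk (ρ j)) q u₀) atTop (𝓝 (ψ εs θ z)) := by
      have : (fun j => ψ (sk (ρ j)) q u₀)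
          = fun j => ψ (ε (ρ j)) θ (orb ψ q u₀ τ (n (ρ j))) := by
        funext j
        exact hdecomp (ρ j)
      rw [this]
      exact tendsto_psi hcoc hεs0 (fun j => hε0 (ρ j)) hεlim tendsto_const_nhds hXlim
    exact tendsto_nhds_unique h5 h6
  have hcirc : ((εs : ℝ) : AddCircle σ) = 0 := by
    have hcoe : Continuous (fun r : ℝ => ((r : ℝ) : AddCircle σ)) :=
      AddCircle.continuous_mk' σ
    have hb1 : Tendsto (fun j => circleFlow σ (sk (ρ j)) q) atTop (𝓝 θ) :=
      ((continuous_fst.tendsto _).comp hspair).comp hρ.tendsto_atTop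
    have hb2 : Tendsto (fun j => circleFlow σ (sk (ρ j)) q) atTop
        (𝓝 (θ + ((εs : ℝ) : AddCircle σ))) := by
      have heq2 : (fun j => circleFlow σ (sk (ρ j)) q)
          = fun j => θ + ((ε (ρ j) : ℝ) : AddCircle σ) := by
        funext j
        exact hbase2 (ρ j)
      rw [heq2]
      exact (continuous_const.add hcoe).continuousAt.tendsto.comp hεlim
    have := tendsto_nhds_unique hb1 hb2
    have h7 : θ + ((εs : ℝ) : AddCircle σ) = θ + 0 := by rw [add_zero]; exact this.symm
    exact add_left_cancel h7
  obtain ⟨kz, hkz⟩ := (AddCircle.coe_eq_zero_iff σ).mp hcirc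
  have hcases : εs = 0 ∨ εs = σ := by
    have hkz' : (kz : ℝ) * σ = εs := by
      rw [← hkz]
      rw [zsmul_eq_mul]
    have hεsσ : εs ≤ σ := by
      have : ∀ j, ε (ρ j) ≤ σ := fun j => hεσ (ρ j)
      exact le_of_tendsto hεlim (Filter.Eventually.of_forall this)
    rcases le_or_gt (kz : ℤ) 0 with hk0 | hk0
    · left
      have : ((kz : ℤ) : ℝ) ≤ 0 := by exact_mod_cast hk0
      nlinarith
    · right
      have : (1:ℝ) ≤ ((kz : ℤ) : ℝ) := by exact_mod_cast hk0
      nlinarith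
  have hntop : Tendsto (fun j => n (ρ j)) atTop atTop := by
    apply nat_tendsto_of_cast (g := fun j => (sk (ρ j) - τ)/σ + (-1))
    · apply tendsto_atTop_add_const_right
      exact Tendsto.atTop_div_const hσ
        (tendsto_atTop_add_const_right _ (-τ)
          (by simpa [sub_eq_add_neg, Function.comp_def] using (hstop.comp hρ.tendsto_atTop)) :
          Tendsto (fun j => sk (ρ j) - τ) atTop atTop)
    · intro k
      have hfl : (sk (ρ k) - τ)/σ < ((n (ρ k) : ℕ) : ℝ) + 1 := Nat.lt_floor_add_one _
      linarith
  rcases hcases with h0 | h0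
  · refine ⟨fun j => n (ρ j), hntop, ?_⟩
    have : v = z := by
      rw [hval, h0, hcoc.1]
    rw [this]
    exact hXlim
  · refine ⟨fun j => n (ρ j) + 1, (tendsto_add_atTop_nat 1).comp hntop, ?_⟩
    have heq3 : (fun j => orb ψ q u₀ τ (n (ρ j) + 1))
        = fun j => ψ σ θ (orb ψ q u₀ τ (n (ρ j))) :=
      funext fun j => orb_succ hσ hcoc hτ hbase _
    rw [heq3, hval, h0]
    exact tendsto_psi_const hcoc hσ.le tendsto_const_nhds hXlim

lemma crossing (hσ : 0 < σ) (hcoc : IsCocycle (circleFlow σ) ψ)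
    (hpre : IsCompact (traj ψ q u₀)) (hτ : 0 ≤ τ) (hbase : circleFlow σ τ q = θ)
    (e : H) (c : ℝ)
    (hgt : ∃ m : ℕ → ℕ, Tendsto m atTop atTop ∧ ∀ j, c < ⟪e, orb ψ q u₀ τ (m j)⟫)
    (hlt : ∃ m : ℕ → ℕ, Tendsto m atTop atTop ∧ ∀ j, ⟪e, orb ψ q u₀ τ (m j)⟫ < c) :
    ∃ y, y ∈ fib ψ q u₀ θ ∧ c ≤ ⟪e, y⟫ ∧ ⟪e, ψ σ θ y⟫ ≤ c := by
  classical
  obtain ⟨mg, hgt1, hgt2⟩ := hgt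
  obtain ⟨ml, hlt1, hlt2⟩ := hlt
  have hex : ∀ j : ℕ, ∃ L : ℕ, mg j < L ∧ ⟪e, orb ψ q u₀ τ L⟫ < c := by
    intro j
    obtain ⟨i, hi⟩ := (hlt1.eventually_gt_atTop (mg j)).exists
    exact ⟨ml i, hi, hlt2 i⟩
  choose L hL1 hL2 using hex
  set Pp : ℕ → ℕ → Prop := fun j i => mg j ≤ i ∧ c < ⟪e, orb ψ q u₀ τ i⟫ with hPp
  set p : ℕ → ℕ := fun j => Nat.findGreatest (Pp j) (L j - 1) with hp
  have hp_spec : ∀ j, Pp j (p j) := by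
    intro j
    exact Nat.findGreatest_spec (Nat.le_sub_one_of_lt (hL1 j)) ⟨le_rfl, hgt2 j⟩
  have hp_succ : ∀ j, ⟪e, orb ψ q u₀ τ (p j + 1)⟫ ≤ c := by
    intro j
    rcases le_or_gt (p j + 1) (L j - 1) with hle | hgt'
    · have hng := Nat.findGreatest_is_greatest (Nat.lt_succ_self (p j)) hle
      by_contra hcc
      push_neg at hcc
      exact hng ⟨le_trans (hp_spec j).1 (Nat.le_succ _), hcc⟩
    · have hpj : p j ≤ L j - 1 := Nat.findGreatest_le _
      have hL1j := hL1 j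
      have : p j + 1 = L j := by omega
      rw [this]
      exact (hL2 j).le
  have hptop : Tendsto p atTop atTop := tendsto_atTop_mono (fun j => (hp_spec j).1) hgt1
  obtain ⟨y, hymem', ρ, hρ, hconv⟩ :=
    (hpre.image continuous_snd).tendsto_subseq
      (x := fun j => orb ψ q u₀ τ (p j)) (fun j => orb_mem_snd hσ hτ _)
  refine ⟨y, orb_limit_mem_fib hσ hτ hbase (hptop.comp hρ.tendsto_atTop) hconv, ?_, ?_⟩
  · have h8 : Tendsto (fun j => ⟪e, orb ψ q u₀ τ (p (ρ j))⟫) atTop (𝓝 ⟪e, y⟫) :=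
      Filter.Tendsto.inner tendsto_const_nhds hconv
    exact ge_of_tendsto h8 (Filter.Eventually.of_forall fun j => (hp_spec (ρ j)).2.le)
  · have h9 : Tendsto (fun j => orb ψ q u₀ τ (p (ρ j) + 1)) atTop (𝓝 (ψ σ θ y)) := by
      have heq : (fun j => orb ψ q u₀ τ (p (ρ j) + 1))
          = fun j => ψ σ θ (orb ψ q u₀ τ (p (ρ j))) :=
        funext fun j => orb_succ hσ hcoc hτ hbase _
      rw [heq]
      exact tendsto_psi_const hcoc hσ.le tendsto_const_nhds hconv
    have h10 : Tendsto (fun j => ⟪e, orb ψ q u₀ τ (p (ρ j) + 1)⟫) atTop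
        (𝓝 ⟪e, ψ σ θ y⟫) := Filter.Tendsto.inner tendsto_const_nhds h9
    exact le_of_tendsto h10 (Filter.Eventually.of_forall fun j => hp_succ (ρ j))

lemma seq_lt (hσ : 0 < σ) (hcoc : IsCocycle (circleFlow σ) ψ)
    (hpre : IsCompact (traj ψ q u₀)) (hτ : 0 ≤ τ) (hbase : circleFlow σ τ q = θ)
    (e : H) (c : ℝ) {u : H} (hu : u ∈ fib ψ q u₀ θ) (hult : ⟪e, u⟫ < c) :
    ∃ m : ℕ → ℕ, Tendsto m atTop atTop ∧ ∀ j, ⟪e, orb ψ q u₀ τ (m j)⟫ < c := by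
  obtain ⟨m1, hm1t, hm1conv⟩ := claimA hσ hcoc hpre hτ hbase hu
  have h8 : Tendsto (fun j => ⟪e, orb ψ q u₀ τ (m1 j)⟫) atTop (𝓝 ⟪e, u⟫) :=
    Filter.Tendsto.inner tendsto_const_nhds hm1conv
  obtain ⟨J, hJ⟩ := eventually_atTop.mp (h8.eventually_lt_const hult)
  exact ⟨fun j => m1 (j + J), hm1t.comp (tendsto_add_atTop_nat J),
    fun j => hJ _ (Nat.le_add_left J j)⟩

lemma seq_gt (hσ : 0 < σ) (hcoc : IsCocycle (circleFlow σ) ψ)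
    (hpre : IsCompact (traj ψ q u₀)) (hτ : 0 ≤ τ) (hbase : circleFlow σ τ q = θ)
    (e : H) (c : ℝ) {u : H} (hu : u ∈ fib ψ q u₀ θ) (hult : c < ⟪e, u⟫) :
    ∃ m : ℕ → ℕ, Tendsto m atTop atTop ∧ ∀ j, c < ⟪e, orb ψ q u₀ τ (m j)⟫ := by
  obtain ⟨m1, hm1t, hm1conv⟩ := claimA hσ hcoc hpre hτ hbase hu
  have h8 : Tendsto (fun j => ⟪e, orb ψ q u₀ τ (m1 j)⟫) atTop (𝓝 ⟪e, u⟫) :=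
    Filter.Tendsto.inner tendsto_const_nhds hm1conv
  obtain ⟨J, hJ⟩ := eventually_atTop.mp (h8.eventually_const_lt hult)
  exact ⟨fun j => m1 (j + J), hm1t.comp (tendsto_add_atTop_nat J),
    fun j => hJ _ (Nat.le_add_left J j)⟩

lemma fixed_point (hσ : 0 < σ) (hcoc : IsCocycle (circleFlow σ) ψ)
    (hpre : IsCompact (traj ψ q u₀)) (h1 : HypH1 P Hplus Hminus) (h2 : HypH2 Hminus 1)
    (h3 : HypH3 ψ P δ ν) (hPi : IsOrthProjOnto Hminus Pii)
    {θ : AddCircle σ} {v : H} (hv : v ∈ fib ψ q u₀ θ) :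
    ψ σ θ v = v := by
  obtain ⟨τ, hτ, hbase⟩ := exists_tau hσ q θ
  obtain ⟨e₀, he₀m, he₀n, he₀f⟩ := exists_unit h2 hPi
  by_contra hne
  have hTv : ψ σ θ v ∈ fib ψ q u₀ θ := by
    have := forward_inv hcoc hσ.le hv
    rwa [AddCircle.coe_period, add_zero] at this
  have hphi_ne : ⟪e₀, ψ σ θ v⟫ ≠ ⟪e₀, v⟫ := by
    intro hc
    exact hne (fib_phi_inj hcoc hpre h1 h3 hPi he₀f hTv hv hc)
  have main : ∀ e : H, (∀ x : H, Pii x = ⟪e, x⟫ • e) → ⟪e, v⟫ < ⟪e, ψ σ θ v⟫ → False := by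
    intro e hef hlt
    set c : ℝ := (⟪e, v⟫ + ⟪e, ψ σ θ v⟫)/2 with hc
    have hc1 : ⟪e, v⟫ < c := by rw [hc]; linarith
    have hc2 : c < ⟪e, ψ σ θ v⟫ := by rw [hc]; linarith
    obtain ⟨y, hymem, hyge, hyle⟩ := crossing hσ hcoc hpre hτ hbase e c
      (seq_gt hσ hcoc hpre hτ hbase e c hTv hc2) (seq_lt hσ hcoc hpre hτ hbase e c hv hc1)
    have hvy : ⟪e, v⟫ < ⟪e, y⟫ := lt_of_lt_of_le hc1 hyge
    have := order_pres hσ hcoc hpre h1 h3 hPi hef hv hymem hvy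
    linarith
  rcases lt_or_gt_of_ne hphi_ne with hlt | hgt
  · apply main (-e₀)
    · intro x
      rw [inner_neg_left, neg_smul, smul_neg, neg_neg]
      exact he₀f x
    · rw [inner_neg_left, inner_neg_left]
      linarith
  · exact main e₀ he₀f hgt

lemma fib_nonempty (hσ : 0 < σ) (hpre : IsCompact (traj ψ q u₀)) (θ : AddCircle σ) :
    (fib ψ q u₀ θ).Nonempty := by
  obtain ⟨τ, hτ, hbase⟩ := exists_tau hσ q θ
  obtain ⟨y, _, ρ, hρ, hconv⟩ := (hpre.image continuous_snd).tendsto_subseq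
    (x := orb ψ q u₀ τ) (fun m => orb_mem_snd hσ hτ m)
  exact ⟨y, orb_limit_mem_fib hσ hτ hbase hρ.tendsto_atTop hconv⟩

lemma sigma_mul_fract (hσ : 0 < σ) (t : ℝ) :
    σ * Int.fract (t/σ) = t - σ*((⌊t/σ⌋ : ℤ) : ℝ) := by
  rw [← Int.self_sub_floor, mul_sub, mul_div_cancel₀ _ hσ.ne']

lemma exists_periodic (hσ : 0 < σ) (hcoc : IsCocycle (circleFlow σ) ψ)
    {θ : AddCircle σ} {v : H} (hfix : ψ σ θ v = v) :
    ∃ w : ℝ → H, IsCompleteTraj (circleFlow σ) ψ θ w ∧ (∀ t, w (t + σ) = w t) ∧ w 0 = v := by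
  have hflowσ : circleFlow σ σ θ = θ := by
    show θ + ((σ : ℝ) : AddCircle σ) = θ
    rw [AddCircle.coe_period, add_zero]
  have lemE : ∀ (b : ℝ), 0 ≤ b → ∀ (k : ℕ), ψ (b + (k:ℝ)*σ) θ v = ψ b θ v := by
    intro b hb k
    induction k with
    | zero => norm_num
    | succ k ih =>
      have h1 : b + ((k+1:ℕ):ℝ)*σ = (b + (k:ℝ)*σ) + σ := by push_cast; ring
      have h2 : (0:ℝ) ≤ b + (k:ℝ)*σ := by positivity
      rw [h1, hcoc.2.1 (b + (k:ℝ)*σ) σ h2 hσ.le θ v, hflowσ, hfix, ih]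
  set w : ℝ → H := fun t => ψ (σ * Int.fract (t/σ)) θ v with hw
  have hfr0 : ∀ t : ℝ, 0 ≤ σ * Int.fract (t/σ) :=
    fun t => mul_nonneg hσ.le (Int.fract_nonneg _)
  have hfr1 : ∀ t : ℝ, σ * Int.fract (t/σ) < σ := by
    intro t
    have := Int.fract_lt_one (t/σ)
    nlinarith
  have hkey : ∀ (t : ℝ) (k : ℤ), 0 ≤ t - σ*(k:ℝ) → ψ (t - σ*(k:ℝ)) θ v = w t := by
    intro t k hk
    have hfr := sigma_mul_fract hσ t
    set m : ℤ := ⌊t/σ⌋ - k with hm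
    have hdiff : t - σ*(k:ℝ) = σ*Int.fract (t/σ) + σ*(m:ℝ) := by
      rw [hfr, hm]
      push_cast
      ring
    have hm0 : 0 ≤ m := by
      by_contra hmc
      push_neg at hmc
      have hm1 : (m:ℝ) ≤ -1 := by exact_mod_cast (by omega : m ≤ -1)
      nlinarith [hfr1 t, hfr0 t]
    have hdec : t - σ*(k:ℝ) = σ*Int.fract (t/σ) + ((m.toNat : ℕ) : ℝ)*σ := by
      rw [hdiff]
      have hmn : ((m.toNat : ℕ) : ℝ) = (m : ℝ) := by
        exact_mod_cast congrArg (Int.cast : ℤ → ℝ) (Int.toNat_of_nonneg hm0)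
      rw [hmn]
      ring
    rw [hdec, lemE _ (hfr0 t) _]
  have hw0 : w 0 = v := by
    rw [hw]
    dsimp only
    rw [zero_div, Int.fract_zero, mul_zero, hcoc.1]
  have hper : ∀ t, w (t + σ) = w t := by
    intro t
    rw [hw]
    dsimp only
    congr 2
    rw [add_div, div_self hσ.ne', Int.fract_add_one]
  have htraj : ∀ t s : ℝ, 0 ≤ t → w (t + s) = ψ t (circleFlow σ s θ) (w s) := by
    intro t s ht
    have hflow : circleFlow σ s θ = circleFlow σ (σ * Int.fract (s/σ)) θ := by
      show θ + ((s : ℝ) : AddCircle σ) = θ + ((σ * Int.fract (s/σ) : ℝ) : AddCircle σ)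
      congr 1
      have hs2 : s = σ * Int.fract (s/σ) + σ*((⌊s/σ⌋:ℤ):ℝ) := by
        rw [sigma_mul_fract hσ]
        ring
      rw [hs2, AddCircle.coe_add, coe_int_mul_period, add_zero]
      congr 1
      rw [← hs2]
    rw [hflow]
    have hws : w s = ψ (σ * Int.fract (s/σ)) θ v := rfl
    rw [hws, ← hcoc.2.1 t (σ * Int.fract (s/σ)) ht (hfr0 s) θ v]
    have h3 : (t+s) - σ*((⌊s/σ⌋:ℤ):ℝ) = t + σ * Int.fract (s/σ) := by
      rw [sigma_mul_fract hσ]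
      ring
    have h4 := hkey (t+s) ⌊s/σ⌋ (by rw [h3]; linarith [hfr0 s])
    rw [h3] at h4
    exact h4.symm
  have hcont : Continuous w := by
    rw [continuous_iff_continuousAt]
    intro t₀
    set k₀ : ℤ := ⌊t₀/σ⌋ - 1 with hk₀
    have hflr : σ*((⌊t₀/σ⌋:ℤ):ℝ) ≤ t₀ := by
      have h2 := Int.floor_le (t₀/σ)
      have h3 := mul_le_mul_of_nonneg_left h2 hσ.le
      rwa [mul_comm σ (t₀/σ), div_mul_cancel₀ _ hσ.ne'] at h3
    have hk₀r : σ*((k₀:ℤ):ℝ) = σ*((⌊t₀/σ⌋:ℤ):ℝ) - σ := by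
      rw [hk₀]
      push_cast
      ring
    have hball : ∀ s ∈ Metric.ball t₀ (σ/2), w s = ψ (s - σ*((k₀:ℤ):ℝ)) θ v := by
      intro s hs
      rw [Metric.mem_ball, Real.dist_eq] at hs
      have h5 := abs_lt.mp hs
      refine (hkey s k₀ ?_).symm
      linarith [h5.1]
    have hCA : ContinuousAt (fun s : ℝ => ψ (s - σ*((k₀:ℤ):ℝ)) θ v) t₀ := by
      have hmain : ContinuousAt (fun p : ℝ × AddCircle σ × H => ψ p.1 p.2.1 p.2.2)
          ((t₀ - σ*((k₀:ℤ):ℝ), θ, v)) := by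
        apply hcoc.2.2.continuousAt
        have hopen : IsOpen {p : ℝ × AddCircle σ × H | 0 < p.1} :=
          isOpen_lt continuous_const continuous_fst
        exact Filter.mem_of_superset
          (hopen.mem_nhds (by linarith : (0:ℝ) < t₀ - σ*((k₀:ℤ):ℝ)))
          (fun p (hp : 0 < p.1) => le_of_lt hp)
      have hg : ContinuousAt
          (fun s : ℝ => ((s - σ*((k₀:ℤ):ℝ), θ, v) : ℝ × AddCircle σ × H)) t₀ :=
        Continuous.continuousAt (by fun_prop)
      have hco : ContinuousAt ((fun p : ℝ × AddCircle σ × H => ψ p.1 p.2.1 p.2.2) ∘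
          (fun s : ℝ => ((s - σ*((k₀:ℤ):ℝ), θ, v) : ℝ × AddCircle σ × H))) t₀ :=
        ContinuousAt.comp hmain hg
      exact hco
    apply hCA.congr
    filter_upwards [Metric.ball_mem_nhds t₀ (by linarith : (0:ℝ) < σ/2)] with s hs
    exact (hball s hs).symm
  exact ⟨w, ⟨hcont, htraj⟩, hper, hw0⟩

end OmegaAux

/-- Lemma 6: for a σ-periodic cocycle under (H1), (H2) with `j = 1` and (H3), the ω-limit
set of a precompact semi-trajectory of the skew-product semiflow consists of σ-periodic
trajectories, and each fibre is (via `Π`) a nonempty compact connected subset of the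
one-dimensional space `H⁻`, i.e. a closed segment. -/
theorem omega_limit_set_structure
    {H : Type*} [NormedAddCommGroup H] [InnerProductSpace ℝ H]
    [CompleteSpace H] [TopologicalSpace.SeparableSpace H]
    (σ : ℝ) (hσ : 0 < σ)
    (ψ : ℝ → AddCircle σ → H → H)
    (hcoc : IsCocycle (circleFlow σ) ψ)
    (P : H →L[ℝ] H) (Hplus Hminus : Submodule ℝ H)
    (h1 : HypH1 P Hplus Hminus)
    (h2 : HypH2 Hminus 1)
    (δ ν : ℝ) (h3 : HypH3 ψ P δ ν)
    (Pi : H →L[ℝ] H) (hPi : IsOrthProjOnto Hminus Pi)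
    (q : AddCircle σ) (u₀ : H)
    (hprecompact : IsCompact
      (closure ((fun t => (circleFlow σ t q, ψ t q u₀)) '' Set.Ici (0:ℝ)))) :
    (∀ p ∈ omegaLimitSet (circleFlow σ) ψ q u₀,
      ∃ w : ℝ → H, IsCompleteTraj (circleFlow σ) ψ p.1 w ∧
        (∀ t : ℝ, w (t + σ) = w t) ∧ w 0 = p.2) ∧
    ∀ q' : AddCircle σ,
      ({v : H | (q', v) ∈ omegaLimitSet (circleFlow σ) ψ q u₀}).Nonempty ∧
      IsCompact {v : H | (q', v) ∈ omegaLimitSet (circleFlow σ) ψ q u₀} ∧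
      Set.InjOn (⇑Pi) {v : H | (q', v) ∈ omegaLimitSet (circleFlow σ) ψ q u₀} ∧
      IsConnected (Pi '' {v : H | (q', v) ∈ omegaLimitSet (circleFlow σ) ψ q u₀}) := by
  have hpre : IsCompact (OmegaAux.traj ψ q u₀) := hprecompact
  obtain ⟨e₀, he₀m, he₀n, he₀f⟩ := OmegaAux.exists_unit h2 hPi
  have he0ne : e₀ ≠ 0 := by
    intro hc
    rw [hc, norm_zero] at he₀n
    norm_num at he₀n
  constructor
  · rintro ⟨θ, v⟩ hp
    have hv : v ∈ OmegaAux.fib ψ q u₀ θ := hp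
    have hfix := OmegaAux.fixed_point hσ hcoc hpre h1 h2 h3 hPi hv
    exact OmegaAux.exists_periodic hσ hcoc hfix
  · intro q'
    have hSc : IsCompact (OmegaAux.fib ψ q u₀ q') := OmegaAux.isCompact_fib hpre q'
    have hSne : (OmegaAux.fib ψ q u₀ q').Nonempty := OmegaAux.fib_nonempty hσ hpre q'
    refine ⟨hSne, hSc, ?_, ?_⟩
    · intro v₁ hv₁ v₂ hv₂ hPieq
      have hv₁' : v₁ ∈ OmegaAux.fib ψ q u₀ q' := hv₁
      have hv₂' : v₂ ∈ OmegaAux.fib ψ q u₀ q' := hv₂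
      apply OmegaAux.fib_phi_inj hcoc hpre h1 h3 hPi he₀f hv₁' hv₂'
      have h8 : ⟪e₀, v₁⟫ • e₀ = ⟪e₀, v₂⟫ • e₀ := by
        rw [← he₀f, ← he₀f]
        exact hPieq
      exact smul_left_injective ℝ he0ne h8
    · set S := OmegaAux.fib ψ q u₀ q' with hS
      set f : H → ℝ := fun v => ⟪e₀, v⟫ with hf
      have hfc : Continuous f := continuous_const.inner continuous_id
      set K := f '' S with hK
      have hKcomp : IsCompact K := hSc.image hfc
      have hKne : K.Nonempty := hSne.image f
      have ha := hKcomp.sInf_mem hKne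
      have hb := hKcomp.sSup_mem hKne
      have hab : sInf K ≤ sSup K := le_csSup hKcomp.bddAbove ha
      obtain ⟨τ, hτ, hbase⟩ := OmegaAux.exists_tau hσ q q'
      have hKint : K = Set.Icc (sInf K) (sSup K) := by
        apply Set.Subset.antisymm
        · intro x hx
          exact ⟨csInf_le hKcomp.bddBelow hx, le_csSup hKcomp.bddAbove hx⟩
        · intro c hc
          by_contra hcK
          have hc1 : sInf K < c := lt_of_le_of_ne hc.1 (fun h => hcK (by rw [← h]; exact ha))
          have hc2 : c < sSup K := lt_of_le_of_ne hc.2 (fun h => hcK (by rw [h]; exact hb))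
          obtain ⟨va, hvaS, hvaf⟩ := ha
          obtain ⟨vb, hvbS, hvbf⟩ := hb
          have hvalt : ⟪e₀, va⟫ < c := by
            rw [show ⟪e₀, va⟫ = f va from rfl, hvaf]
            exact hc1
          have hvbgt : c < ⟪e₀, vb⟫ := by
            rw [show ⟪e₀, vb⟫ = f vb from rfl, hvbf]
            exact hc2
          obtain ⟨y, hyS, hyge, hyle⟩ := OmegaAux.crossing hσ hcoc hpre hτ hbase e₀ c
            (OmegaAux.seq_gt hσ hcoc hpre hτ hbase e₀ c hvbS hvbgt)
            (OmegaAux.seq_lt hσ hcoc hpre hτ hbase e₀ c hvaS hvalt)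
          have hyfix := OmegaAux.fixed_point hσ hcoc hpre h1 h2 h3 hPi hyS
          rw [hyfix] at hyle
          exact hcK ⟨y, hyS, le_antisymm hyle hyge⟩
      have hPiim : Pi '' S = (fun r : ℝ => r • e₀) '' K := by
        rw [hK, Set.image_image]
        exact Set.image_congr (fun v _ => he₀f v)
      show IsConnected (Pi '' S)
      rw [hPiim, hKint]
      exact IsConnected.image ⟨Set.nonempty_Icc.mpr hab, isPreconnected_Icc⟩ _
        (continuous_id.smul continuous_const).continuousOn
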